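/- Fix positive integers k and ℓ. For every nonempty finite subset S of the positive integers, there exists a unique positive integer m such that either (1) b_S(km) = ℓm − i for some integer i with 0 ≤ i ≤ ℓ−1, or (2) b_S(km − j) = ℓm − ℓ and b_S(km − j − 1) = ℓm − ℓ + 1 for some integer j with 0 ≤ j ≤ k−1; moreover conditions (1) and (2) cannot hold simultaneously for the same m. This m is the least positive integer with b_S(km) ≤ ℓm (the (k,ℓ)-rank of S). -/
import Mathlib


/-- `(k,ℓ)`-rank dichotomy: for every nonempty finite set `S` of positive
integers, with `b m = |{s ∈ S : s > m}|`, there is a unique positive integer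
`m` such that (1) `b (km) = ℓm - i` for some `0 ≤ i ≤ ℓ-1`, or
(2) `b (km - j) = ℓm - ℓ` and `b (km - j - 1) = ℓm - ℓ + 1` for some
`0 ≤ j ≤ k-1`; the two cases are mutually exclusive, and this `m` is the
least positive integer with `b (km) ≤ ℓm` (the `(k,ℓ)`-rank of `S`). -/
theorem kl_rank_dichotomy (k l : ℕ) (hk : 0 < k) (hl : 0 < l)
    (S : Finset ℕ+) (hS : S.Nonempty)
    (b : ℕ → ℕ) (hb : ∀ m : ℕ, b m = (S.filter (fun s : ℕ+ => m < (s : ℕ))).card) :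
    (∃! m : ℕ, 0 < m ∧
        ((∃ i : ℕ, i < l ∧ b (k * m) = l * m - i) ∨
          (∃ j : ℕ, j < k ∧ b (k * m - j) = l * m - l ∧
            b (k * m - j - 1) = l * m - l + 1))) ∧
    (∀ m : ℕ, 0 < m →
        ¬((∃ i : ℕ, i < l ∧ b (k * m) = l * m - i) ∧
          (∃ j : ℕ, j < k ∧ b (k * m - j) = l * m - l ∧
            b (k * m - j - 1) = l * m - l + 1))) ∧
    (∀ m : ℕ, (0 < m ∧
        ((∃ i : ℕ, i < l ∧ b (k * m) = l * m - i) ∨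
          (∃ j : ℕ, j < k ∧ b (k * m - j) = l * m - l ∧
            b (k * m - j - 1) = l * m - l + 1))) →
        IsLeast {n : ℕ | 0 < n ∧ b (k * n) ≤ l * n} m) := by
  -- b is antitone
  have hmono : ∀ {m n : ℕ}, m ≤ n → b n ≤ b m := by
    intro m n h
    rw [hb, hb]
    apply Finset.card_le_card
    intro x hx
    simp only [Finset.mem_filter] at *
    exact ⟨hx.1, by omega⟩
  -- b drops by at most one per step
  have hstep : ∀ m : ℕ, b m ≤ b (m + 1) + 1 := by
    intro m
    rw [hb, hb]
    have hsub : S.filter (fun s : ℕ+ => m < (s : ℕ)) ⊆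
        S.filter (fun s : ℕ+ => m + 1 < (s : ℕ)) ∪
        S.filter (fun s : ℕ+ => (s : ℕ) = m + 1) := by
      intro x hx
      simp only [Finset.mem_filter, Finset.mem_union] at *
      rcases Nat.lt_or_ge (m + 1) (x : ℕ) with h | h
      · exact Or.inl ⟨hx.1, h⟩
      · exact Or.inr ⟨hx.1, by omega⟩
    have h1 : (S.filter (fun s : ℕ+ => (s : ℕ) = m + 1)).card ≤ 1 := by
      apply Finset.card_le_one.mpr
      intro a ha c hc
      simp only [Finset.mem_filter] at ha hc
      exact PNat.coe_injective (by omega)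
    calc (S.filter (fun s : ℕ+ => m < (s : ℕ))).card
        ≤ (S.filter (fun s : ℕ+ => m + 1 < (s : ℕ)) ∪
            S.filter (fun s : ℕ+ => (s : ℕ) = m + 1)).card := Finset.card_le_card hsub
      _ ≤ (S.filter (fun s : ℕ+ => m + 1 < (s : ℕ))).card +
            (S.filter (fun s : ℕ+ => (s : ℕ) = m + 1)).card := Finset.card_union_le _ _
      _ ≤ (S.filter (fun s : ℕ+ => m + 1 < (s : ℕ))).card + 1 := by omega
  -- b 0 > 0
  have hb0 : 0 < b 0 := by
    rw [hb]
    have : S.filter (fun s : ℕ+ => 0 < (s : ℕ)) = S := by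
      apply Finset.filter_true_of_mem
      intro x _
      exact x.pos
    rw [this]
    exact Finset.card_pos.mpr hS
  -- crossing lemma
  have hcross : ∀ (c s t : ℕ), s ≤ t → b t ≤ c → c < b s →
      ∃ u, s < u ∧ u ≤ t ∧ b u = c ∧ b (u - 1) = c + 1 := by
    intro c s t hst hbt hbs
    have hex : ∃ u, b u ≤ c := ⟨t, hbt⟩
    have hule : b (Nat.find hex) ≤ c := Nat.find_spec hex
    have hut : Nat.find hex ≤ t := Nat.find_le hbt
    have hsu : s < Nat.find hex := by
      by_contra h
      have := hmono (not_lt.mp h)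
      omega
    have hprev : c < b (Nat.find hex - 1) :=
      not_le.mp (Nat.find_min hex (show Nat.find hex - 1 < Nat.find hex by omega))
    have h1 : b (Nat.find hex - 1) ≤ b (Nat.find hex) + 1 := by
      have h2 := hstep (Nat.find hex - 1)
      have h3 : Nat.find hex - 1 + 1 = Nat.find hex := by omega
      rwa [h3] at h2
    exact ⟨Nat.find hex, hsu, hut, by omega, by omega⟩
  -- the rank exists
  have hP : ∃ n, 0 < n ∧ b (k * n) ≤ l * n := by
    refine ⟨b 0, hb0, ?_⟩
    calc b (k * b 0) ≤ b 0 := hmono (Nat.zero_le _)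
      _ ≤ l * b 0 := Nat.le_mul_of_pos_left _ hl
  -- key lemma: the condition forces leastness
  have hleast : ∀ m : ℕ, (0 < m ∧
      ((∃ i : ℕ, i < l ∧ b (k * m) = l * m - i) ∨
        (∃ j : ℕ, j < k ∧ b (k * m - j) = l * m - l ∧
          b (k * m - j - 1) = l * m - l + 1))) →
      IsLeast {n : ℕ | 0 < n ∧ b (k * n) ≤ l * n} m := by
    rintro m ⟨hm, hdisj⟩
    obtain ⟨m', rfl⟩ : ∃ m', m = m' + 1 := ⟨m - 1, by omega⟩
    have hkm : k * (m' + 1) = k * m' + k := by ring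
    have hlm : l * (m' + 1) = l * m' + l := by ring
    -- membership and the "previous block" bound
    have hkey : b (k * (m' + 1)) ≤ l * (m' + 1) ∧ l * m' < b (k * m') := by
      rcases hdisj with ⟨i, hi, h1⟩ | ⟨j, hj, h1, h2⟩
      · constructor
        · omega
        · have h3 : b (k * (m' + 1)) ≤ b (k * m') := hmono (by omega)
          omega
      · constructor
        · have h3 : b (k * (m' + 1)) ≤ b (k * (m' + 1) - j) := hmono (by omega)
          omega
        · have h3 : b (k * (m' + 1) - j - 1) ≤ b (k * m') := hmono (by omega)
          omega
    constructor
    · exact ⟨hm, hkey.1⟩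
    · intro n hn
      rcases hn with ⟨hn0, hnle⟩
      by_contra h
      have hnm : n ≤ m' := by omega
      have h4 : b (k * m') ≤ b (k * n) := hmono (Nat.mul_le_mul_left k hnm)
      have h5 : l * n ≤ l * m' := Nat.mul_le_mul_left l hnm
      omega
  refine ⟨?_, ?_, hleast⟩
  · -- existence and uniqueness
    have hrpos : 0 < Nat.find hP := (Nat.find_spec hP).1
    have hrle : b (k * Nat.find hP) ≤ l * Nat.find hP := (Nat.find_spec hP).2
    obtain ⟨r', hr'⟩ : ∃ r', Nat.find hP = r' + 1 := ⟨Nat.find hP - 1, by omega⟩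
    have hkm : k * (r' + 1) = k * r' + k := by ring
    have hlm : l * (r' + 1) = l * r' + l := by ring
    have hprev : l * r' < b (k * r') := by
      rcases Nat.eq_zero_or_pos r' with h0 | h0
      · simp [h0, hb0]
      · have := Nat.find_min hP (show r' < Nat.find hP by omega)
        push_neg at this
        exact this h0
    rw [hr'] at hrle
    have hcond : ((∃ i : ℕ, i < l ∧ b (k * (r' + 1)) = l * (r' + 1) - i) ∨
        (∃ j : ℕ, j < k ∧ b (k * (r' + 1) - j) = l * (r' + 1) - l ∧
          b (k * (r' + 1) - j - 1) = l * (r' + 1) - l + 1)) := by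
      by_cases hc : l * r' < b (k * (r' + 1))
      · exact Or.inl ⟨l * (r' + 1) - b (k * (r' + 1)), by omega, by omega⟩
      · push_neg at hc
        obtain ⟨u, hu1, hu2, hu3, hu4⟩ :=
          hcross (l * r') (k * r') (k * (r' + 1)) (by omega) hc hprev
        refine Or.inr ⟨k * (r' + 1) - u, by omega, ?_, ?_⟩
        · have : k * (r' + 1) - (k * (r' + 1) - u) = u := by omega
          rw [this]; omega
        · have : k * (r' + 1) - (k * (r' + 1) - u) - 1 = u - 1 := by omega
          rw [this]; omega
    refine ⟨r' + 1, ⟨by omega, hcond⟩, ?_⟩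
    intro y hy
    have h1 := hleast y hy
    have h2 := hleast (r' + 1) ⟨by omega, hcond⟩
    exact h1.unique h2
  · -- mutual exclusivity
    rintro m hm ⟨⟨i, hi, h1⟩, ⟨j, hj, h2, h3⟩⟩
    have h4 : b (k * m) ≤ b (k * m - j) := hmono (by omega)
    have h5 : l ≤ l * m := Nat.le_mul_of_pos_right l hm
    omega
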